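/- Let F_q be a finite field with q elements, q odd, of characteristic p. Let k be an integer with 1 < k ≤ q-1 and k | q-1, and let a_1,...,a_k be the k-th roots of unity in F_q. Define D_k = [(a_i + a_j)^{(q-3)/2}]_{1≤i,j≤k}. Then det D_k = (-1)^{(k+1)(q-3)/2} · w_k · k^k, where w_k = ∏_{s=0}^{k-1} ∑_{r=0}^{⌊(q-3-2s)/(2k)⌋} binom((q-3)/2, s+rk), all computed in F_p ⊆ F_q. -/

import Mathlib

open Finset Polynomial


private lemma aux_sum {M : Type*} [AddCommMonoid M] (k m : ℕ) (hk : 0 < k) (f : ℕ → M)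
    (hf : ∀ t, m < t → f t = 0) :
    ∑ t ∈ range (m + 1), f t
      = ∑ s ∈ range k, ∑ r ∈ range (m / k + 1), f (s + r * k) := by
  rw [← Finset.sum_product']
  rw [← Finset.sum_filter_of_ne (p := fun p : ℕ × ℕ => p.1 + p.2 * k ≤ m)
    (fun x _ hx => by by_contra h; exact hx (hf _ (Nat.lt_of_not_le h)))]
  refine Finset.sum_bij' (fun t _ => ((t % k, t / k) : ℕ × ℕ))
    (fun p _ => p.1 + p.2 * k) ?_ ?_ ?_ ?_ ?_
  · intro t ht
    rw [Finset.mem_range, Nat.lt_succ_iff] at ht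
    simp only [Finset.mem_filter, Finset.mem_product, Finset.mem_range]
    refine ⟨⟨Nat.mod_lt _ hk, ?_⟩, ?_⟩
    · exact Nat.lt_succ_of_le (Nat.div_le_div_right ht)
    · rw [Nat.mod_add_div']; exact ht
  · intro p hp
    simp only [Finset.mem_filter] at hp
    simp [Nat.lt_succ_iff, hp.2]
  · intro t ht; exact Nat.mod_add_div' t k
  · intro p hp
    simp only [Finset.mem_filter, Finset.mem_product, Finset.mem_range] at hp
    obtain ⟨⟨h1, h2⟩, h3⟩ := hp
    exact Prod.ext (by simp [Nat.add_mul_mod_self_right, Nat.mod_eq_of_lt h1])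
      (by simp [Nat.add_mul_div_right _ _ hk, Nat.div_eq_of_lt h1])
  · intro t ht; rw [Nat.mod_add_div']


private lemma aux_poly {F : Type*} [Field F] (k : ℕ) (hk : 0 < k) (a : Fin k → F)
    (ha : Function.Injective a) (hroot : ∀ i, a i ^ k = 1) :
    (∏ i : Fin k, (X - C (a i))) = X ^ k - C (1 : F) := by
  classical
  have hpmonic : (X ^ k - C (1:F)).Monic := monic_X_pow_sub_C 1 hk.ne'
  have hpne : (X ^ k - C (1:F)) ≠ 0 := hpmonic.ne_zero
  have hnd : (Finset.univ.val.map a).Nodup := Finset.univ.nodup.map ha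
  have hle : (Finset.univ.val.map a) ≤ (X ^ k - C (1:F)).roots := by
    refine Multiset.le_iff_count.2 fun x => ?_
    by_cases hx : x ∈ Finset.univ.val.map a
    · rw [Multiset.count_eq_one_of_mem hnd hx]
      refine Multiset.one_le_count_iff_mem.2 ?_
      obtain ⟨i, _, rfl⟩ := Multiset.mem_map.1 hx
      rw [Polynomial.mem_roots hpne]
      simp [Polynomial.IsRoot.def, hroot i]
    · rw [Multiset.count_eq_zero.2 hx]; exact Nat.zero_le _
  have hdvd : (∏ i : Fin k, (X - C (a i))) ∣ (X ^ k - C (1:F)) := by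
    have h2 := (Multiset.prod_X_sub_C_dvd_iff_le_roots hpne _).2 hle
    rw [Finset.prod_eq_multiset_prod]
    simpa [Multiset.map_map, Function.comp_def] using h2
  have hmon : (∏ i : Fin k, (X - C (a i))).Monic :=
    monic_prod_of_monic _ _ fun i _ => monic_X_sub_C (a i)
  have hdeg : (∏ i : Fin k, (X - C (a i))).natDegree = k := by
    rw [natDegree_prod _ _ fun i _ => X_sub_C_ne_zero (a i)]
    simp [natDegree_X_sub_C]
  exact (eq_of_monic_of_dvd_of_natDegree_le hmon hpmonic hdvd
    (by rw [natDegree_X_pow_sub_C, hdeg])).symm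


private lemma aux_F1 {F : Type*} [Field F] (k : ℕ) (hk : 0 < k) (a : Fin k → F)
    (hpoly : (∏ i : Fin k, (X - C (a i))) = X ^ k - C (1 : F)) :
    ∏ i, a i = (-1 : F) ^ (k + 1) := by
  have h := congrArg (Polynomial.eval 0) hpoly
  rw [Polynomial.eval_prod] at h
  simp only [eval_sub, eval_X, eval_C, eval_pow] at h
  rw [zero_pow hk.ne', zero_sub] at h
  have h2 : ∏ i : Fin k, ((0:F) - a i) = (-1)^k * ∏ i, a i := by
    calc ∏ i : Fin k, ((0:F) - a i) = ∏ i : Fin k, (-1 : F) * a i :=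
          Finset.prod_congr rfl fun i _ => by ring
      _ = (∏ _i : Fin k, (-1:F)) * ∏ i, a i := Finset.prod_mul_distrib
      _ = (-1)^k * ∏ i, a i := by simp [Finset.prod_const, Finset.card_univ]
  rw [h2] at h
  have h3 : (∏ i, a i) = (-1:F)^k * ((-1:F)^k * ∏ i, a i) := by
    rw [← mul_assoc, ← mul_pow]; simp
  rw [h] at h3
  rw [h3, pow_succ]

private lemma aux_F2 {F : Type*} [Field F] (k : ℕ) (hk : 0 < k) (a : Fin k → F)
    (hpoly : (∏ i : Fin k, (X - C (a i))) = X ^ k - C (1 : F)) (i : Fin k) :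
    ∏ j ∈ Finset.univ.erase i, (a i - a j) = (k : F) * a i ^ (k - 1) := by
  classical
  have h := congrArg Polynomial.derivative hpoly
  rw [Finset.prod_eq_multiset_prod, Polynomial.derivative_prod,
    derivative_sub, derivative_C, sub_zero, derivative_X_pow,
    ← Finset.sum_eq_multiset_sum] at h
  have h2 := congrArg (Polynomial.eval (a i)) h
  rw [Polynomial.eval_finset_sum] at h2
  have h3 : ∀ b ∈ Finset.univ, Polynomial.eval (a i)
      ((Multiset.map (fun l => X - C (a l)) (Finset.univ.val.erase b)).prod
        * Polynomial.derivative (X - C (a b)))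
      = Polynomial.eval (a i) ((∏ l ∈ Finset.univ.erase b, (X - C (a l)))) := by
    intro b _
    rw [← Finset.erase_val, ← Finset.prod_eq_multiset_prod]
    simp [derivative_sub]
  rw [Finset.sum_congr rfl h3] at h2
  rw [Finset.sum_eq_single i] at h2
  · rw [Polynomial.eval_prod] at h2
    simp only [eval_sub, eval_X, eval_C] at h2
    rw [h2]
    simp
  · intro b _ hbi
    rw [Polynomial.eval_prod]
    exact Finset.prod_eq_zero (Finset.mem_erase.2 ⟨hbi.symm, Finset.mem_univ i⟩)
      (by simp)
  · intro hi; exact absurd (Finset.mem_univ i) hi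


private lemma aux_G {F : Type*} [Field F] (k : ℕ) (hk : 0 < k) (a : Fin k → F)
    (ha0 : ∀ i, a i ≠ 0)
    (hF2 : ∀ i, ∏ j ∈ Finset.univ.erase i, (a i - a j) = (k : F) * a i ^ (k - 1)) :
    (Matrix.vandermonde a).det * (Matrix.vandermonde fun i => (a i)⁻¹).det = (k : F) ^ k := by
  classical
  rw [Matrix.det_vandermonde, Matrix.det_vandermonde]
  have herase : ∀ i : Fin k, Finset.univ.erase i = Finset.Ioi i ∪ Finset.Iio i := by
    intro i
    ext j
    simp only [Finset.mem_erase, Finset.mem_univ, and_true, Finset.mem_union,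
      Finset.mem_Ioi, Finset.mem_Iio]
    exact ⟨fun h => Or.symm h.lt_or_gt, fun h => h.elim ne_of_gt ne_of_lt⟩
  have hdisj : ∀ i : Fin k, Disjoint (Finset.Ioi i) (Finset.Iio i) := fun i =>
    Finset.disjoint_left.2 fun j hj hj' =>
      absurd (Finset.mem_Ioi.1 hj) (not_lt.2 (le_of_lt (Finset.mem_Iio.1 hj')))
  have hswap : ∀ f : Fin k → Fin k → F,
      (∏ i, ∏ j ∈ Finset.Iio i, f i j) = ∏ j, ∏ i ∈ Finset.Ioi j, f i j := fun f =>
    Finset.prod_comm' (fun x y => by simp [Finset.mem_Ioi, Finset.mem_Iio])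
  have hprodne : (∏ i, a i) ≠ 0 := Finset.prod_ne_zero_iff.2 fun i _ => ha0 i
  have key : (∏ i, ∏ j ∈ Finset.Ioi i, (a j - a i)) * (∏ i, ∏ j ∈ Finset.Ioi i, (a i - a j))
      = (k:F)^k * (∏ i, a i)^(k-1) := by
    calc (∏ i, ∏ j ∈ Finset.Ioi i, (a j - a i)) * (∏ i, ∏ j ∈ Finset.Ioi i, (a i - a j))
        = (∏ i, ∏ j ∈ Finset.Iio i, (a i - a j)) * (∏ i, ∏ j ∈ Finset.Ioi i, (a i - a j)) := by
          rw [hswap (fun x y => a x - a y)]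
      _ = ∏ i, ((∏ j ∈ Finset.Iio i, (a i - a j)) * (∏ j ∈ Finset.Ioi i, (a i - a j))) :=
          Finset.prod_mul_distrib.symm
      _ = ∏ i, ∏ j ∈ Finset.univ.erase i, (a i - a j) := by
          refine Finset.prod_congr rfl fun i _ => ?_
          rw [herase i, Finset.prod_union (hdisj i), mul_comm]
      _ = ∏ i, (k:F) * a i ^ (k-1) := Finset.prod_congr rfl fun i _ => hF2 i
      _ = (k:F)^k * (∏ i, a i)^(k-1) := by
          rw [Finset.prod_mul_distrib, Finset.prod_const, Finset.card_univ, Fintype.card_fin,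
            Finset.prod_pow]
  have key2 : (∏ i, ∏ j ∈ Finset.Ioi i, (a i * a j)) = (∏ i, a i)^(k-1) := by
    rw [Finset.prod_congr rfl fun (i : Fin k) _ =>
      (Finset.prod_mul_distrib : ∏ j ∈ Finset.Ioi i, (a i * a j) = _), Finset.prod_mul_distrib,
      ← hswap (fun x _ => a x), ← Finset.prod_mul_distrib]
    have h1 : ∀ i : Fin k, (∏ _j ∈ Finset.Ioi i, a i) * (∏ _j ∈ Finset.Iio i, a i)
        = a i ^ (k-1) := by
      intro i
      rw [← Finset.prod_union (hdisj i), ← herase i, Finset.prod_const,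
        Finset.card_erase_of_mem (Finset.mem_univ i), Finset.card_univ, Fintype.card_fin]
    rw [Finset.prod_congr rfl fun i _ => h1 i, Finset.prod_pow]
  have hinv : ∀ i j : Fin k, (a j)⁻¹ - (a i)⁻¹ = (a i - a j) * ((a i) * (a j))⁻¹ := by
    intro i j
    rw [mul_inv, sub_mul, ← mul_assoc, mul_inv_cancel₀ (ha0 i), one_mul,
      mul_comm ((a i)⁻¹) ((a j)⁻¹), ← mul_assoc, mul_inv_cancel₀ (ha0 j), one_mul]
  calc (∏ i, ∏ j ∈ Finset.Ioi i, (a j - a i))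
        * ∏ i, ∏ j ∈ Finset.Ioi i, ((a j)⁻¹ - (a i)⁻¹)
      = (∏ i, ∏ j ∈ Finset.Ioi i, (a j - a i))
        * ∏ i, ∏ j ∈ Finset.Ioi i, ((a i - a j) * ((a i) * (a j))⁻¹) := by
        rw [Finset.prod_congr rfl fun (i : Fin k) _ =>
          Finset.prod_congr rfl fun (j : Fin k) _ => hinv i j]
    _ = (∏ i, ∏ j ∈ Finset.Ioi i, (a j - a i))
        * ((∏ i, ∏ j ∈ Finset.Ioi i, (a i - a j))
          * (∏ i, ∏ j ∈ Finset.Ioi i, (a i * a j))⁻¹) := by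
        rw [Finset.prod_congr rfl fun (i : Fin k) _ =>
          (Finset.prod_mul_distrib :
            ∏ j ∈ Finset.Ioi i, ((a i - a j) * ((a i) * (a j))⁻¹) = _),
          Finset.prod_mul_distrib]
        congr 1
        congr 1
        rw [Finset.prod_congr rfl fun (i : Fin k) _ =>
          (Finset.prod_inv_distrib _ : (∏ j ∈ Finset.Ioi i, (a i * a j)⁻¹) = _),
          Finset.prod_inv_distrib]
    _ = (k : F) ^ k := by
        rw [← mul_assoc, key, key2, mul_assoc, mul_inv_cancel₀ (pow_ne_zero _ hprodne), mul_one]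

theorem stmt_7 (F : Type*) [Field F] [Fintype F] (q k : ℕ)
    (hq : Fintype.card F = q) (hodd : Odd q)
    (hk1 : 1 < k) (hk2 : k ≤ q - 1) (hdvd : k ∣ q - 1)
    (a : Fin k → F) (ha : Function.Injective a) (hroot : ∀ i, a i ^ k = 1) :
    Matrix.det (Matrix.of fun i j : Fin k => (a i + a j) ^ ((q - 3) / 2))
      = (-1) ^ ((k + 1) * ((q - 3) / 2)) *
        (∏ s ∈ Finset.range k, ∑ r ∈ Finset.range ((q - 3 - 2 * s) / (2 * k) + 1),
          (Nat.choose ((q - 3) / 2) (s + r * k) : F)) *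
        (k : F) ^ k := by
  classical
  have hk0 : 0 < k := by omega
  have hq3 : 3 ≤ q := by omega
  obtain ⟨n, hn⟩ := hodd
  set m := (q - 3) / 2 with hm
  have hm2 : 2 * m = q - 3 := by omega
  have ha0 : ∀ i, a i ≠ 0 := by
    intro i h0
    have h1 := hroot i
    rw [h0, zero_pow hk0.ne'] at h1
    exact zero_ne_one h1
  have hpoly := aux_poly k hk0 a ha hroot
  have hF1 := aux_F1 k hk0 a hpoly
  have hF2 : ∀ i, ∏ j ∈ Finset.univ.erase i, (a i - a j) = (k : F) * a i ^ (k - 1) :=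
    fun i => aux_F2 k hk0 a hpoly i
  have hG := aux_G k hk0 a ha0 hF2
  set c : ℕ → F := fun s => ∑ r ∈ Finset.range ((q - 3 - 2 * s) / (2 * k) + 1),
    (Nat.choose m (s + r * k) : F) with hc
  have hD : (Matrix.of fun i j : Fin k => (a i + a j) ^ m)
      = (Matrix.of fun (i s : Fin k) => c (s : ℕ) * Matrix.vandermonde a i s)
        * Matrix.transpose (Matrix.of fun (j s : Fin k) =>
            a j ^ m * Matrix.vandermonde (fun t => (a t)⁻¹) j s) := by
    ext i j
    rw [Matrix.mul_apply]
    simp only [Matrix.of_apply, Matrix.transpose_apply, Matrix.vandermonde_apply]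
    rw [add_pow]
    set f : ℕ → F := fun t => (Nat.choose m t : F)
      * (a i ^ (t % k) * (((a j)⁻¹) ^ (t % k) * a j ^ m)) with hf
    have step1 : ∀ t ∈ Finset.range (m + 1),
        a i ^ t * a j ^ (m - t) * (Nat.choose m t : F) = f t := by
      intro t ht
      rw [Finset.mem_range, Nat.lt_succ_iff] at ht
      have h1 : a i ^ t = a i ^ (t % k) := pow_eq_pow_mod t (hroot i)
      have h2 : ((a j)⁻¹) ^ (t % k) = (a j ^ t)⁻¹ := by
        rw [inv_pow, ← pow_eq_pow_mod t (hroot j)]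
      have h3 : a j ^ (m - t) = a j ^ m / a j ^ t := by
        rw [eq_div_iff (pow_ne_zero t (ha0 j)), ← pow_add]
        congr 1
        omega
      rw [hf]
      simp only []
      rw [h1, h2, h3, div_eq_mul_inv]
      ring
    rw [Finset.sum_congr rfl step1]
    have hfz : ∀ t, m < t → f t = 0 := by
      intro t ht
      rw [hf]
      simp only []
      rw [Nat.choose_eq_zero_of_lt ht, Nat.cast_zero, zero_mul]
    rw [aux_sum k m hk0 f hfz]
    rw [Fin.sum_univ_eq_sum_range
      (fun s => c s * a i ^ s * (a j ^ m * ((a j)⁻¹) ^ s)) k]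
    refine Finset.sum_congr rfl fun s hs => ?_
    rw [Finset.mem_range] at hs
    have hmod : ∀ r : ℕ, (s + r * k) % k = s := fun r => by
      rw [Nat.add_mul_mod_self_right, Nat.mod_eq_of_lt hs]
    have step2 : ∀ r ∈ Finset.range (m / k + 1),
        f (s + r * k) = (Nat.choose m (s + r * k) : F)
          * (a i ^ s * (((a j)⁻¹) ^ s * a j ^ m)) := by
      intro r _
      rw [hf]
      simp only []
      rw [hmod r]
    rw [Finset.sum_congr rfl step2, ← Finset.sum_mul]
    have hcs : (∑ r ∈ Finset.range (m / k + 1), (Nat.choose m (s + r * k) : F)) = c s := by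
      rw [hc]
      simp only []
      have hr : (q - 3 - 2 * s) / (2 * k) = (m - s) / k := by
        have h1 : q - 3 - 2 * s = 2 * (m - s) := by omega
        rw [h1, Nat.mul_div_mul_left _ _ (by norm_num : 0 < 2)]
      rw [hr]
      symm
      apply Finset.sum_subset
      · intro r hr2
        rw [Finset.mem_range] at *
        have h4 : (m - s) / k ≤ m / k := Nat.div_le_div_right (Nat.sub_le m s)
        omega
      · intro r _ hr2
        rw [Finset.mem_range, Nat.lt_succ_iff, not_le] at hr2
        have h5 : m - s < r * k := (Nat.div_lt_iff_lt_mul hk0).mp hr2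
        rw [Nat.choose_eq_zero_of_lt (by omega), Nat.cast_zero]
    rw [hcs]
    ring
  rw [hD, Matrix.det_mul, Matrix.det_transpose]
  rw [Matrix.det_mul_row (fun s : Fin k => c (s : ℕ)) (Matrix.vandermonde a)]
  rw [Matrix.det_mul_column (fun j : Fin k => a j ^ m)
    (Matrix.vandermonde fun t => (a t)⁻¹)]
  rw [Finset.prod_pow, hF1, ← pow_mul]
  rw [Fin.prod_univ_eq_prod_range (fun s => c s) k]
  calc (∏ s ∈ Finset.range k, c s) * (Matrix.vandermonde a).det
        * ((-1 : F) ^ ((k + 1) * m) * (Matrix.vandermonde fun t => (a t)⁻¹).det)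
      = (-1 : F) ^ ((k + 1) * m) * (∏ s ∈ Finset.range k, c s)
        * ((Matrix.vandermonde a).det * (Matrix.vandermonde fun t => (a t)⁻¹).det) := by
        ring
    _ = (-1 : F) ^ ((k + 1) * m) * (∏ s ∈ Finset.range k, c s) * (k : F) ^ k := by
        rw [hG]
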